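/- arXiv:1509.05018 — 2 statements merged into one kernel-verified Lean document; each statement's English description precedes it below -/
import Mathlib

section
/- If X is a finite topological space admitting an orbit expansive homeomorphism, then the topology of X is discrete. -/
open Set

/-- The `n`-th iterate (`n : ℤ`) of a homeomorphism `f`, as a function. -/
def Homeomorph.zpow {X : Type*} [TopologicalSpace X] (f : X ≃ₜ X) (n : ℤ) : X → X :=
  ⇑(f.toEquiv ^ n)

/-- `U = {U 0, …, U (l-1)}` is an o-expansive covering for the homeomorphism `f`:
it is a finite open cover such that any two points whose whole orbits stay
`U`-close must coincide. -/
def IsOExpansiveCover {X : Type*} [TopologicalSpace X] {l : ℕ} (f : X ≃ₜ X)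
    (U : Fin l → Set X) : Prop :=
  (∀ i, IsOpen (U i)) ∧ (⋃ i, U i) = Set.univ ∧
    ∀ x y : X, (∀ n : ℤ, ∃ i, f.zpow n x ∈ U i ∧ f.zpow n y ∈ U i) → x = y

/-- A homeomorphism is orbit expansive if it admits an o-expansive covering. -/
def OrbitExpansive {X : Type*} [TopologicalSpace X] (f : X ≃ₜ X) : Prop :=
  ∃ (l : ℕ) (U : Fin l → Set X), IsOExpansiveCover f U

/-- `U` is an r-expansivity covering for `f`: a finite open cover such that for every
open cover `V` and every sequence `k : ℤ → Fin n` there is `N` with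
`⋂_{|j| ≤ N} f^j(U (k j))` contained in a member of `V`. -/
def IsRExpansiveCover {X : Type*} [TopologicalSpace X] {n : ℕ} (f : X ≃ₜ X)
    (U : Fin n → Set X) : Prop :=
  (∀ i, IsOpen (U i)) ∧ (⋃ i, U i) = Set.univ ∧
    ∀ V : Set (Set X), (∀ v ∈ V, IsOpen v) → ⋃₀ V = Set.univ →
      ∀ k : ℤ → Fin n, ∃ N : ℕ, ∃ v ∈ V,
        (⋂ j ∈ Set.Icc (-(N : ℤ)) (N : ℤ), f.zpow j '' U (k j)) ⊆ v

/-- A homeomorphism is refinement expansive if it admits an r-expansivity covering. -/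
def RefinementExpansive {X : Type*} [TopologicalSpace X] (f : X ≃ₜ X) : Prop :=
  ∃ (n : ℕ) (U : Fin n → Set X), IsRExpansiveCover f U

/-- `U` is a uniform r-expansivity covering for `f`: `N` can be chosen uniformly in the
sequence `k`. -/
def IsUniformRExpansiveCover {X : Type*} [TopologicalSpace X] {n : ℕ} (f : X ≃ₜ X)
    (U : Fin n → Set X) : Prop :=
  (∀ i, IsOpen (U i)) ∧ (⋃ i, U i) = Set.univ ∧
    ∀ V : Set (Set X), (∀ v ∈ V, IsOpen v) → ⋃₀ V = Set.univ →
      ∃ N : ℕ, ∀ k : ℤ → Fin n, ∃ v ∈ V,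
        (⋂ j ∈ Set.Icc (-(N : ℤ)) (N : ℤ), f.zpow j '' U (k j)) ⊆ v

/-- A homeomorphism is uniformly refinement expansive if it admits a uniform
r-expansivity covering. -/
def UniformlyRefinementExpansive {X : Type*} [TopologicalSpace X] (f : X ≃ₜ X) : Prop :=
  ∃ (n : ℕ) (U : Fin n → Set X), IsUniformRExpansiveCover f U


private lemma continuous_zpow' {X : Type*} [TopologicalSpace X] (f : X ≃ₜ X) (n : ℤ) :
    Continuous (f.zpow n) := by
  unfold Homeomorph.zpow
  obtain ⟨m, rfl | rfl⟩ := Int.eq_nat_or_neg n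
  · rw [zpow_natCast]
    simp only [Equiv.Perm.coe_pow]
    exact f.continuous.iterate m
  · rw [zpow_neg, zpow_natCast, ← inv_pow]
    simp only [Equiv.Perm.coe_pow]
    exact Continuous.iterate (by exact f.symm.continuous) m

/-- Remark 2.6: a finite space admitting an orbit expansive homeomorphism is discrete. -/
theorem discreteTopology_of_finite_orbitExpansive {X : Type*} [TopologicalSpace X]
    [Finite X] (f : X ≃ₜ X) (hf : OrbitExpansive f) : DiscreteTopology X := by
  obtain ⟨l, U, hopen, hcov, hexp⟩ := hf
  have : T1Space X := by
    rw [t1Space_iff_specializes_imp_eq]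
    intro x y hxy
    refine hexp x y fun n => ?_
    have hspec : f.zpow n x ⤳ f.zpow n y := by
      rw [specializes_iff_forall_open] at hxy ⊢
      intro s hs hys
      have := hxy _ (hs.preimage (continuous_zpow' f n)) hys
      exact this
    have : f.zpow n y ∈ ⋃ i, U i := hcov ▸ Set.mem_univ _
    obtain ⟨i, hi⟩ := Set.mem_iUnion.mp this
    exact ⟨i, hspec.mem_open (hopen i) hi, hi⟩
  infer_instance
end

section
/- Let f : X → X be an orbit expansive homeomorphism of a topological space X. Then the set of periodic points of f, i.e. {p ∈ X : fⁿ(p) = p for some n ≥ 1}, is countable. -/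
open Set

lemma perm_zpow_fix_aux {X : Type*} (e : Equiv.Perm X) (p : X) (h : e p = p) :
    ∀ k : ℤ, (e ^ k) p = p := by
  intro k
  induction k using Int.induction_on with
  | zero => simp
  | succ n ih => rw [zpow_add_one, Equiv.Perm.mul_apply, h, ih]
  | pred n ih =>
      rw [zpow_sub_one, Equiv.Perm.mul_apply]
      have h' : e⁻¹ p = p := by
        nth_rewrite 1 [← h]; simp
      rw [h', ih]

lemma homeo_zpow_add_aux {X : Type*} [TopologicalSpace X] (f : X ≃ₜ X) (a b : ℤ) (x : X) :
    f.zpow (a + b) x = f.zpow a (f.zpow b x) := by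
  show (f.toEquiv ^ (a + b)) x = (f.toEquiv ^ a) ((f.toEquiv ^ b) x)
  rw [zpow_add, Equiv.Perm.mul_apply]

/-- Proposition 2.15: the set of periodic points of an orbit expansive homeomorphism
is countable. -/
theorem countable_periodicPts_of_orbitExpansive {X : Type*} [TopologicalSpace X]
    (f : X ≃ₜ X) (hf : OrbitExpansive f) :
    {p : X | ∃ n : ℕ, 1 ≤ n ∧ f.zpow (n : ℤ) p = p}.Countable := by
  obtain ⟨l, U, hopen, hcov, hexp⟩ := hf
  have hmem : ∀ x : X, ∃ i, x ∈ U i := by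
    intro x
    have hx : x ∈ ⋃ i, U i := hcov ▸ Set.mem_univ x
    simpa using hx
  choose c hc using hmem
  have key : ∀ m : ℕ, 1 ≤ m → {p : X | f.zpow (m : ℤ) p = p}.Countable := by
    intro m hm
    rw [← Set.countable_coe_iff]
    set S := {p : X | f.zpow (m : ℤ) p = p} with hS
    let g : S → (Fin m → Fin l) := fun p j => c (f.zpow (j : ℤ) p.1)
    have hper : ∀ x : X, f.zpow (m : ℤ) x = x → ∀ jm : ℤ,
        f.zpow jm x = f.zpow (jm % m) x := by
      intro x hx jm
      have hfix := perm_zpow_fix_aux (f.toEquiv ^ (m : ℤ)) x hx (jm / m)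
      rw [← zpow_mul] at hfix
      calc f.zpow jm x = f.zpow (jm % m + m * (jm / m)) x := by
            rw [Int.emod_add_mul_ediv]
        _ = f.zpow (jm % m) (f.zpow (m * (jm / m)) x) := homeo_zpow_add_aux f _ _ x
        _ = f.zpow (jm % m) x := by
            exact congrArg (f.zpow (jm % m)) hfix
    have hginj : Function.Injective g := by
      intro p q hpq
      have : p.1 = q.1 := by
        apply hexp
        intro n
        have hmpos : (0 : ℤ) < (m : ℤ) := by exact_mod_cast hm
        have h0 : 0 ≤ n % m := Int.emod_nonneg n (by omega)
        have h1 : n % m < m := Int.emod_lt_of_pos n hmpos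
        refine ⟨g p ⟨(n % m).toNat, by omega⟩, ?_, ?_⟩
        · have := hc (f.zpow (n % m) p.1)
          rw [hper p.1 p.2 n]
          simpa [g, Int.toNat_of_nonneg h0] using this
        · have := hc (f.zpow (n % m) q.1)
          rw [hper q.1 q.2 n]
          have hgq : g q ⟨(n % m).toNat, by omega⟩ = g p ⟨(n % m).toNat, by omega⟩ := by
            rw [hpq]
          rw [← hgq]
          simpa [g, Int.toNat_of_nonneg h0] using this
      exact Subtype.ext this
    exact Function.Injective.countable hginj
  have hsub : {p : X | ∃ n : ℕ, 1 ≤ n ∧ f.zpow (n : ℤ) p = p} ⊆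
      ⋃ n : ℕ, {p : X | f.zpow ((n + 1 : ℕ) : ℤ) p = p} := by
    rintro p ⟨n, hn, hp⟩
    refine Set.mem_iUnion.mpr ⟨n - 1, ?_⟩
    have : n - 1 + 1 = n := by omega
    rw [this]
    exact hp
  exact (Set.countable_iUnion fun n => key (n + 1) (by omega)).mono hsub
end
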